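/- Fix an integer d ≥ 2 and k ∈ (−π,π)^d, and let λ ∈ ℂ be any root of the quadratic equation λ² = 2d·D̂(k)·λ − (2d−1) (i.e. λ = d·D̂(k) ± √((d·D̂(k))² − (2d−1))). Then A[k]·(λ·1⃗ − D[k]·1⃗) = λ·(λ·1⃗ − D[k]·1⃗); in particular, for k ≠ 0 the two roots λ_{±1}(k) = d·D̂(k) ± √((d·D̂(k))² − (2d−1)) are eigenvalues of A[k] with eigenvectors λ_{±1}(k)·1⃗ − D[k]·1⃗ ≠ 0. For k = 0, the root λ_1(0) = 2d−1 has eigenvector (2d−2)·1⃗, and the root λ_{−1}(0) = 1 has eigenvector e⃗_1 − e⃗_{−1}, i.e. A[0]·(e⃗_1 − e⃗_{−1}) = e⃗_1 − e⃗_{−1}, where e⃗_ι ∈ ℂ^I is the ι-th coordinate vector. -/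

import Mathlib

open scoped BigOperators
open Matrix

noncomputable section

/-- The index set `I = {-d, …, -1, 1, …, d}`. -/
def Idx (d : ℕ) : Finset ℤ := (Finset.Icc (-(d : ℤ)) d).erase 0

lemma mem_Idx {d : ℕ} {ι : ℤ} (h : ι ∈ Idx d) : ι ≠ 0 ∧ -(d : ℤ) ≤ ι ∧ ι ≤ d := by
  simpa [Idx, Finset.mem_erase, Finset.mem_Icc, and_assoc] using h

lemma mem_Idx' {d : ℕ} {ι : ℤ} (h1 : ι ≠ 0) (h2 : -(d : ℤ) ≤ ι) (h3 : ι ≤ d) :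
    ι ∈ Idx d := by
  simp [Idx, Finset.mem_erase, Finset.mem_Icc]; omega

/-- `k_ι = sign(ι) · k_{|ι|}` (with `|ι| ∈ {1,…,d}` re-indexed as `Fin d`). -/
def kc {d : ℕ} (k : Fin d → ℝ) (ι : Idx d) : ℝ :=
  (ι.1.sign : ℝ) * k ⟨ι.1.natAbs - 1, by
    obtain ⟨h1, h2, h3⟩ := mem_Idx ι.2; omega⟩

/-- The negation `-ι` as an element of the index set. -/
def negIdx {d : ℕ} (ι : Idx d) : Idx d :=
  ⟨-ι.1, by obtain ⟨h1, h2, h3⟩ := mem_Idx ι.2; exact mem_Idx' (by omega) (by omega) (by omega)⟩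

/-- The coordinate vector `e⃗_ι ∈ ℂ^I`. -/
def eVec {d : ℕ} (ι : Idx d) : Idx d → ℂ := fun κ => if κ = ι then 1 else 0

/-- The unit step `e_ι = sign(ι)·(basis vector |ι|)` in `ℤ^d`. -/
def stepVec {d : ℕ} (ι : Idx d) : Fin d → ℤ :=
  fun j => if (j : ℕ) = ι.1.natAbs - 1 then ι.1.sign else 0

/-- The all-ones matrix `C`. -/
def matC (d : ℕ) : Matrix (Idx d) (Idx d) ℂ := Matrix.of fun _ _ => 1

/-- The matrix `J` with `J_{ι,κ} = δ_{ι,-κ}`. -/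
def matJ (d : ℕ) : Matrix (Idx d) (Idx d) ℂ :=
  Matrix.of fun ι κ => if ι.1 = -κ.1 then 1 else 0

/-- The diagonal matrix `D[k]` with entries `e^{i k_ι}`. -/
def matD {d : ℕ} (k : Fin d → ℝ) : Matrix (Idx d) (Idx d) ℂ :=
  Matrix.diagonal fun ι => Complex.exp (Complex.I * (kc k ι : ℂ))

/-- The NBW transition matrix `A[k] = (C − J)·D[−k]`. -/
def matA {d : ℕ} (k : Fin d → ℝ) : Matrix (Idx d) (Idx d) ℂ :=
  (matC d - matJ d) * matD (-k)

/-- `ω` is an `n`-step nearest-neighbour non-backtracking walk on `ℤ^d`. -/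
def IsNBW (d n : ℕ) (ω : Fin (n + 1) → (Fin d → ℤ)) : Prop :=
  ω 0 = 0 ∧
  (∀ i : ℕ, ∀ hi : i < n,
    (∑ j, |ω ⟨i + 1, by omega⟩ j - ω ⟨i, by omega⟩ j|) = 1) ∧
  (∀ i : ℕ, ∀ hi : i + 2 ≤ n, ω ⟨i + 2, by omega⟩ ≠ ω ⟨i, by omega⟩)

/-- `b_n(x)`: the number of `n`-step NBWs ending at `x`. -/
def bc (d n : ℕ) (x : Fin d → ℤ) : ℕ :=
  Nat.card {ω : Fin (n + 1) → (Fin d → ℤ) // IsNBW d n ω ∧ ω (Fin.last n) = x}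

/-- `b_n^ι(x)`: the number of `n`-step NBWs ending at `x` whose first step is not `e_ι`. -/
def bcRes (d n : ℕ) (ι : Idx d) (x : Fin d → ℤ) : ℕ :=
  Nat.card {ω : Fin (n + 1) → (Fin d → ℤ) //
    IsNBW d n ω ∧ ω (Fin.last n) = x ∧ ∀ _ : 1 ≤ n, ω ⟨1, by omega⟩ ≠ stepVec ι}

/-- Fourier transform `f̂(k) = Σ_x f(x) e^{i k·x}` of a (finitely supported) `f : ℤ^d → ℕ`. -/
def fhat {d : ℕ} (f : (Fin d → ℤ) → ℕ) (k : Fin d → ℝ) : ℂ :=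
  ∑' x : Fin d → ℤ, (f x : ℂ) * Complex.exp (Complex.I * ∑ j, (k j : ℂ) * (x j : ℂ))

/-- `b̂_n(k)`. -/
def bhat (d n : ℕ) (k : Fin d → ℝ) : ℂ := fhat (bc d n) k

/-- `b⃗_n(k)`, the vector with entries `b̂_n^ι(k)`. -/
def bvec (d n : ℕ) (k : Fin d → ℝ) : Idx d → ℂ := fun ι => fhat (bcRes d n ι) k

/-- `D̂(k) = (1/d) Σ_j cos k_j`. -/
def Dhat {d : ℕ} (k : Fin d → ℝ) : ℝ := (1 / d) * ∑ j, Real.cos (k j)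



/-- Auxiliary: the positive index `j+1` as an element of `Idx d`. -/
def posIdx (d : ℕ) (j : Fin d) : Idx d :=
  ⟨(j : ℤ) + 1, mem_Idx' (by omega) (by have := j.2; omega) (by have := j.2; omega)⟩

lemma negIdx_val {d : ℕ} (ι : Idx d) : (negIdx ι).1 = -ι.1 := rfl

lemma kc_negIdx {d : ℕ} (k : Fin d → ℝ) (ι : Idx d) : kc k (negIdx ι) = - kc k ι := by
  unfold kc
  have h1 : ((negIdx ι).1.sign : ℝ) = -(ι.1.sign : ℝ) := by
    rw [negIdx_val, Int.sign_neg]; push_cast; ring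
  have h2 : (negIdx ι).1.natAbs = ι.1.natAbs := by rw [negIdx_val, Int.natAbs_neg]
  rw [h1]
  have : (⟨(negIdx ι).1.natAbs - 1, by obtain ⟨a,b,c⟩ := mem_Idx (negIdx ι).2; omega⟩ : Fin d)
      = ⟨ι.1.natAbs - 1, by obtain ⟨a,b,c⟩ := mem_Idx ι.2; omega⟩ := by
    apply Fin.ext; simp [h2]
  rw [this]; ring

lemma kc_neg_k {d : ℕ} (k : Fin d → ℝ) (ι : Idx d) : kc (-k) ι = - kc k ι := by
  unfold kc; simp

lemma kc_posIdx {d : ℕ} (k : Fin d → ℝ) (j : Fin d) : kc k (posIdx d j) = k j := by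
  unfold kc
  have hs : ((posIdx d j).1.sign : ℝ) = 1 := by
    have : (posIdx d j).1 = (j : ℤ) + 1 := rfl
    rw [this, Int.sign_eq_one_iff_pos.2 (by positivity)]; norm_num
  rw [hs, one_mul]
  have hj : (⟨(posIdx d j).1.natAbs - 1, by obtain ⟨a,b,c⟩ := mem_Idx (posIdx d j).2; omega⟩ : Fin d) = j := by
    apply Fin.ext
    show (posIdx d j).1.natAbs - 1 = (j : ℕ)
    have : (posIdx d j).1 = (j : ℤ) + 1 := rfl
    omega
  rw [hj]

/-- The reindexing equivalence. -/
def idxEquiv (d : ℕ) : Fin d × Bool ≃ Idx d :=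
    { toFun := fun p => if p.2 then posIdx d p.1 else negIdx (posIdx d p.1)
      invFun := fun ι => (⟨ι.1.natAbs - 1, by obtain ⟨a,b,c⟩ := mem_Idx ι.2; omega⟩,
        decide (0 < ι.1))
      left_inv := by
        rintro ⟨j, b⟩
        cases b <;>
        · simp only [if_true, if_false]
          refine Prod.ext (Fin.ext ?_) ?_ <;>
            simp [posIdx, negIdx] <;> omega
      right_inv := by
        rintro ⟨ι, hι⟩
        obtain ⟨a, b, c⟩ := mem_Idx hι
        by_cases h : 0 < ι
        · simp only [h, decide_true, if_true]
          exact Subtype.ext (by simp [posIdx]; omega)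
        · simp only [h, decide_false, if_false]
          exact Subtype.ext (by simp [posIdx, negIdx]; omega) }

/-- Splitting a sum over `Idx d` into positive and negative parts. -/
lemma sum_idx {d : ℕ} {M : Type*} [AddCommMonoid M] (F : Idx d → M) :
    ∑ ι : Idx d, F ι = ∑ j : Fin d, (F (posIdx d j) + F (negIdx (posIdx d j))) := by
  classical
  rw [← Equiv.sum_comp (idxEquiv d) F, Fintype.sum_prod_type]
  refine Finset.sum_congr rfl fun j _ => ?_
  simp [idxEquiv, Fintype.sum_bool]

lemma mulVec_C {d : ℕ} (w : Idx d → ℂ) : matC d *ᵥ w = fun _ => ∑ κ : Idx d, w κ := by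
  funext ι; simp [matC, Matrix.mulVec, dotProduct]

lemma mulVec_J {d : ℕ} (w : Idx d → ℂ) : matJ d *ᵥ w = fun ι => w (negIdx ι) := by
  funext ι
  show ∑ κ : Idx d, (if ι.1 = -κ.1 then (1:ℂ) else 0) * w κ = w (negIdx ι)
  rw [Fintype.sum_eq_single (negIdx ι)]
  · simp [negIdx_val]
  · intro κ hκ
    have : ι.1 ≠ -κ.1 := by
      intro h; exact hκ (Subtype.ext (by rw [negIdx_val]; omega))
    simp [this]

lemma mulVec_D {d : ℕ} (k : Fin d → ℝ) (w : Idx d → ℂ) :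
    matD k *ᵥ w = fun ι => Complex.exp (Complex.I * (kc k ι : ℂ)) * w ι := by
  funext ι; exact Matrix.mulVec_diagonal _ _ _


lemma kc_zero {d : ℕ} (ι : Idx d) : kc (0 : Fin d → ℝ) ι = 0 := by
  unfold kc; simp

lemma exp_pair (x : ℝ) :
    Complex.exp (Complex.I * ((-x : ℝ) : ℂ)) + Complex.exp (Complex.I * ((x : ℝ) : ℂ))
      = 2 * ((Real.cos x : ℝ) : ℂ) := by
  rw [show Complex.I * ((-x : ℝ) : ℂ) = ((-x : ℝ) : ℂ) * Complex.I by ring,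
    show Complex.I * ((x : ℝ) : ℂ) = ((x : ℝ) : ℂ) * Complex.I by ring,
    Complex.exp_mul_I, Complex.exp_mul_I]
  push_cast
  rw [Complex.cos_neg, Complex.sin_neg, ← Complex.ofReal_cos]
  push_cast
  ring

lemma exp_cancel (x : ℝ) :
    Complex.exp (Complex.I * ((-x : ℝ) : ℂ)) * Complex.exp (Complex.I * ((x : ℝ) : ℂ)) = 1 := by
  rw [← Complex.exp_add]
  push_cast
  rw [show Complex.I * -(x : ℂ) + Complex.I * (x : ℂ) = 0 by ring, Complex.exp_zero]

/-- roots of `λ² = 2d·D̂(k)·λ − (2d−1)` are eigenvalues of `A[k]`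
with eigenvectors `λ·1⃗ − D[k]·1⃗` (nonzero when `k ≠ 0`); at `k = 0` the root `2d−1`
has eigenvector `(2d−2)·1⃗` and the root `1` has eigenvector `e⃗_1 − e⃗_{−1}`. -/
theorem nbw_dominant_eigenvalues (d : ℕ) (hd : 2 ≤ d) (k : Fin d → ℝ)
    (hk : ∀ j, k j ∈ Set.Ioo (-Real.pi) Real.pi) :
    (∀ lam : ℂ, lam ^ 2 = 2 * d * (Dhat k : ℂ) * lam - (2 * d - 1) →
      matA k *ᵥ (lam • (fun _ => (1 : ℂ)) - matD k *ᵥ fun _ => (1 : ℂ)) =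
        lam • (lam • (fun _ => (1 : ℂ)) - matD k *ᵥ fun _ => (1 : ℂ))) ∧
    (k ≠ 0 → ∀ lam : ℂ, lam ^ 2 = 2 * d * (Dhat k : ℂ) * lam - (2 * d - 1) →
      lam • (fun _ => (1 : ℂ)) - matD k *ᵥ (fun _ => (1 : ℂ)) ≠ 0) ∧
    (k = 0 →
      matA k *ᵥ ((2 * (d : ℂ) - 2) • fun _ => (1 : ℂ)) =
        (2 * (d : ℂ) - 1) • ((2 * (d : ℂ) - 2) • fun _ => (1 : ℂ)) ∧
      matA k *ᵥ (eVec ⟨1, mem_Idx' (by omega) (by omega) (by omega)⟩ -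
          eVec ⟨-1, mem_Idx' (by omega) (by omega) (by omega)⟩) =
        eVec ⟨1, mem_Idx' (by omega) (by omega) (by omega)⟩ -
          eVec ⟨-1, mem_Idx' (by omega) (by omega) (by omega)⟩) := by
  have hdC : (d : ℂ) ≠ 0 := Nat.cast_ne_zero.mpr (by omega)
  have h2d : (∑ _κ : Idx d, (1 : ℂ)) = 2 * d := by
    rw [sum_idx]; simp; ring
  have hS : (∑ κ : Idx d, Complex.exp (Complex.I * ((-(kc k κ) : ℝ) : ℂ)))
      = 2 * d * ((Dhat k : ℝ) : ℂ) := by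
    rw [sum_idx]
    have step : ∀ j : Fin d,
        Complex.exp (Complex.I * ((-(kc k (posIdx d j)) : ℝ) : ℂ))
          + Complex.exp (Complex.I * ((-(kc k (negIdx (posIdx d j))) : ℝ) : ℂ))
        = 2 * ((Real.cos (k j) : ℝ) : ℂ) := by
      intro j
      rw [kc_negIdx, kc_posIdx, neg_neg]
      exact exp_pair (k j)
    rw [Finset.sum_congr rfl fun j _ => step j]
    rw [Dhat]
    push_cast
    rw [Finset.mul_sum, Finset.mul_sum]
    refine Finset.sum_congr rfl fun j _ => ?_
    field_simp
  have hvec : (matD k *ᵥ fun _ => (1 : ℂ)) = fun ι => Complex.exp (Complex.I * ((kc k ι : ℝ) : ℂ)) := by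
    rw [mulVec_D]; funext ι; rw [mul_one]
  have hpart1 : ∀ lam : ℂ, lam ^ 2 = 2 * d * (Dhat k : ℂ) * lam - (2 * d - 1) →
      matA k *ᵥ (lam • (fun _ => (1 : ℂ)) - matD k *ᵥ fun _ => (1 : ℂ)) =
        lam • (lam • (fun _ => (1 : ℂ)) - matD k *ᵥ fun _ => (1 : ℂ)) := by
    intro lam hlam
    have hveq : (lam • (fun _ => (1 : ℂ)) - matD k *ᵥ fun _ => (1 : ℂ))
        = fun κ : Idx d => lam - Complex.exp (Complex.I * ((kc k κ : ℝ) : ℂ)) := by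
      rw [hvec]; funext κ; simp
    rw [hveq, matA, ← Matrix.mulVec_mulVec, mulVec_D, Matrix.sub_mulVec, mulVec_C, mulVec_J]
    funext ι
    simp only [Pi.sub_apply, Pi.smul_apply, smul_eq_mul, kc_neg_k, kc_negIdx, neg_neg]
    have hsum : (∑ κ : Idx d, Complex.exp (Complex.I * ((-(kc k κ) : ℝ) : ℂ)) *
          (lam - Complex.exp (Complex.I * ((kc k κ : ℝ) : ℂ))))
        = lam * (2 * d * ((Dhat k : ℝ) : ℂ)) - 2 * d := by
      have step : ∀ κ : Idx d, Complex.exp (Complex.I * ((-(kc k κ) : ℝ) : ℂ)) *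
            (lam - Complex.exp (Complex.I * ((kc k κ : ℝ) : ℂ)))
          = lam * Complex.exp (Complex.I * ((-(kc k κ) : ℝ) : ℂ)) - 1 := fun κ => by
        linear_combination -exp_cancel (kc k κ)
      rw [Finset.sum_congr rfl fun κ _ => step κ, Finset.sum_sub_distrib, ← Finset.mul_sum,
        hS, h2d]
    rw [hsum]
    have hc := exp_cancel (kc k ι)
    push_cast at hc hlam ⊢
    linear_combination -hlam + hc
  refine ⟨hpart1, ?_, ?_⟩
  · -- nonvanishing of the eigenvector for k ≠ 0
    intro hk0 lam _ hv
    obtain ⟨j, hj⟩ : ∃ j, k j ≠ 0 := by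
      by_contra h
      push_neg at h
      exact hk0 (funext h)
    have h1 := congrFun hv (posIdx d j)
    have h2 := congrFun hv (negIdx (posIdx d j))
    simp only [hvec, Pi.sub_apply, Pi.smul_apply, smul_eq_mul, mul_one, Pi.zero_apply,
      kc_posIdx, kc_negIdx, sub_eq_zero] at h1 h2
    have hee : Complex.exp (Complex.I * ((k j : ℝ) : ℂ))
        = Complex.exp (Complex.I * ((-(k j) : ℝ) : ℂ)) := by
      rw [← h1, ← h2]
    have him : Real.sin (k j) = Real.sin (-(k j)) := by
      have := congrArg Complex.im hee
      rwa [show Complex.I * ((k j : ℝ) : ℂ) = ((k j : ℝ) : ℂ) * Complex.I by ring,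
        show Complex.I * ((-(k j) : ℝ) : ℂ) = ((-(k j) : ℝ) : ℂ) * Complex.I by ring,
        Complex.exp_ofReal_mul_I_im, Complex.exp_ofReal_mul_I_im] at this
    rw [Real.sin_neg] at him
    have hsin : Real.sin (k j) = 0 := by linarith
    obtain ⟨hlo, hhi⟩ := hk j
    exact hj ((Real.sin_eq_zero_iff_of_lt_of_lt hlo hhi).mp hsin)
  · -- the case k = 0
    intro hk0
    subst hk0
    constructor
    · have hD : Dhat (0 : Fin d → ℝ) = 1 := by
        rw [Dhat]
        simp [Finset.card_univ]
        field_simp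
      have hlam : ((2 * (d : ℂ) - 1)) ^ 2
          = 2 * d * (Dhat (0 : Fin d → ℝ) : ℂ) * (2 * (d : ℂ) - 1) - (2 * d - 1) := by
        rw [hD]; push_cast; ring
      have h := hpart1 (2 * (d : ℂ) - 1) hlam
      have hveq : ((2 * (d : ℂ) - 1) • (fun _ => (1 : ℂ)) - matD (0 : Fin d → ℝ) *ᵥ fun _ => (1 : ℂ))
          = ((2 * (d : ℂ) - 2) • fun _ => (1 : ℂ)) := by
        rw [hvec]
        funext ι
        simp [kc_zero, Complex.exp_zero]
        ring
      rw [hveq] at h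
      exact h
    · rw [matA, ← Matrix.mulVec_mulVec, mulVec_D, Matrix.sub_mulVec, mulVec_C, mulVec_J]
      set p : Idx d := ⟨1, mem_Idx' (by omega) (by omega) (by omega)⟩ with hp
      set n : Idx d := ⟨-1, mem_Idx' (by omega) (by omega) (by omega)⟩ with hn
      have hw : (fun ι => Complex.exp (Complex.I * ((kc (-(0 : Fin d → ℝ)) ι : ℝ) : ℂ)) *
          (eVec p - eVec n) ι) = eVec p - eVec n := by
        funext ι
        rw [neg_zero, kc_zero]
        simp
      rw [hw]
      funext ι
      simp only [Pi.sub_apply]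
      have hD1 : ∀ κ : Idx d, Complex.exp (Complex.I * ((kc (-(0 : Fin d → ℝ)) κ : ℝ) : ℂ)) = 1 := by
        intro κ; rw [neg_zero, kc_zero]; simp
      simp only [hD1, one_mul]
      have hsum0 : (∑ κ : Idx d, (eVec p κ - eVec n κ)) = 0 := by
        rw [Finset.sum_sub_distrib]
        have h1 : (∑ κ : Idx d, eVec p κ) = 1 := by simp [eVec]
        have h2 : (∑ κ : Idx d, eVec n κ) = 1 := by simp [eVec]
        rw [h1, h2, sub_self]
      rw [hsum0, zero_sub]
      have hpv : p.1 = 1 := rfl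
      have hnv : n.1 = -1 := rfl
      have hiff1 : (negIdx ι = p) ↔ (ι = n) := by
        rw [Subtype.ext_iff, Subtype.ext_iff, negIdx_val, hpv, hnv]
        constructor <;> (intro h; omega)
      have hiff2 : (negIdx ι = n) ↔ (ι = p) := by
        rw [Subtype.ext_iff, Subtype.ext_iff, negIdx_val, hpv, hnv]
        constructor <;> (intro h; omega)
      simp only [eVec, hiff1, hiff2]
      ring

end
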